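/- Let b̂ be an entire function and C, β > 0 constants such that |b̂(ζ)| ≤ C e^{β|ζ|} for all ζ ∈ ℂ. Then the series K(ξ,ζ) := Σ_{k≥1} ((−ξ)^k/k!) b̂^{*k}(ζ−ξ) converges locally uniformly on ℂ×ℂ and defines a holomorphic function of (ξ,ζ) on ℂ×ℂ; moreover, for every μ > 0 one has |K(ξ,ζ)| ≤ C|ξ| e^{μ|ξ| + (C/μ + β)|ζ−ξ|} for all (ξ,ζ) ∈ ℂ×ℂ. -/

import Mathlib

open Finset
open scoped Real

noncomputable section

/-- Convolution `(f*g)(ζ) := ∫₀^ζ f(ζ-ξ) g(ξ) dξ`, the integral being taken along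
the line segment `[0,ζ]`, parametrised by `ξ = tζ`, `t ∈ [0,1]`. -/
def conv (f g : ℂ → ℂ) (ζ : ℂ) : ℂ :=
  ζ * ∫ t in (0:ℝ)..1, f (ζ - (t : ℂ) * ζ) * g ((t : ℂ) * ζ)

/-- Iterated convolution powers: `convIter f k = f^{*(k+1)}`, i.e.
`convIter f 0 = f^{*1} = f` and `convIter f (k+1) = f^{*(k+1)} * f`. -/
def convIter (f : ℂ → ℂ) : ℕ → ℂ → ℂ
  | 0 => f
  | k + 1 => conv (convIter f k) f

/-- The kernel `K(ξ,ζ) := Σ_{k≥1} ((-ξ)^k / k!) f^{*k}(ζ-ξ)`. -/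
def Kker (f : ℂ → ℂ) (ξ ζ : ℂ) : ℂ :=
  ∑' k : ℕ, ((-ξ) ^ (k + 1) / (Nat.factorial (k + 1) : ℂ)) * convIter f k (ζ - ξ)

lemma continuous_deriv_entire {f : ℂ → ℂ} (hf : Differentiable ℂ f) :
    Continuous (deriv f) :=
  (hf.contDiff (n := 2)).continuous_deriv (by norm_num)

lemma bound_on_ball {h : ℂ → ℂ} (hh : Continuous h) (R : ℝ) :
    ∃ M : ℝ, 0 ≤ M ∧ ∀ z : ℂ, ‖z‖ ≤ R → ‖h z‖ ≤ M := by
  obtain ⟨M, hM⟩ := (isCompact_closedBall (0:ℂ) R).exists_bound_of_continuousOn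
    hh.continuousOn
  exact ⟨max M 0, le_max_right _ _, fun z hz =>
    le_trans (hM z (by simpa [Metric.mem_closedBall, dist_eq_norm] using hz)) (le_max_left _ _)⟩

lemma deriv_cauchy_bound {f : ℂ → ℂ} (hf : Differentiable ℂ f) {M : ℝ} {z : ℂ}
    (h : ∀ w : ℂ, ‖w - z‖ ≤ 1 → ‖f w‖ ≤ M) : ‖deriv f z‖ ≤ M := by
  have := Complex.norm_deriv_le_of_forall_mem_sphere_norm_le (c := z) (R := 1) (f := f)
    one_pos hf.diffContOnCl
    (fun w hw => h w (by rw [Metric.mem_sphere, dist_eq_norm] at hw; rw [hw]))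
  simpa using this

set_option maxHeartbeats 1000000 in
lemma conv_differentiable {f g : ℂ → ℂ} (hf : Differentiable ℂ f) (hg : Differentiable ℂ g) :
    Differentiable ℂ (conv f g) := by
  intro ζ₀
  set R : ℝ := ‖ζ₀‖ + 1 with hR
  obtain ⟨Mf, hMf0, hMf⟩ := bound_on_ball hf.continuous R
  obtain ⟨Mg, hMg0, hMg⟩ := bound_on_ball hg.continuous R
  obtain ⟨Mf', hMf'0, hMf'⟩ := bound_on_ball (continuous_deriv_entire hf) R
  obtain ⟨Mg', hMg'0, hMg'⟩ := bound_on_ball (continuous_deriv_entire hg) R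
  set F : ℂ → ℝ → ℂ := fun ζ t => f (ζ - (t:ℂ) * ζ) * g ((t:ℂ) * ζ) with hF
  set F' : ℂ → ℝ → ℂ := fun ζ t =>
    deriv f (ζ - (t:ℂ) * ζ) * (1 - (t:ℂ)) * g ((t:ℂ) * ζ)
      + f (ζ - (t:ℂ) * ζ) * (deriv g ((t:ℂ) * ζ) * (t:ℂ)) with hF'
  have cont0 : ∀ ζ : ℂ, Continuous fun t : ℝ => ζ - (t:ℂ) * ζ :=
    fun ζ => continuous_const.sub ((Complex.continuous_ofReal.mul continuous_const))
  have cont0' : ∀ ζ : ℂ, Continuous fun t : ℝ => (t:ℂ) * ζ :=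
    fun ζ => Complex.continuous_ofReal.mul continuous_const
  have contF : ∀ ζ : ℂ, Continuous (F ζ) := fun ζ =>
    (hf.continuous.comp (cont0 ζ)).mul (hg.continuous.comp (cont0' ζ))
  have contF' : Continuous (F' ζ₀) := by
    refine Continuous.add (Continuous.mul (Continuous.mul ?_ ?_) ?_) (Continuous.mul ?_
      (Continuous.mul ?_ ?_))
    · exact (continuous_deriv_entire hf).comp (cont0 ζ₀)
    · exact continuous_const.sub Complex.continuous_ofReal
    · exact hg.continuous.comp (cont0' ζ₀)
    · exact hf.continuous.comp (cont0 ζ₀)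
    · exact (continuous_deriv_entire hg).comp (cont0' ζ₀)
    · exact Complex.continuous_ofReal
  have hnorm : ∀ ζ : ℂ, ζ ∈ Metric.ball ζ₀ 1 → ∀ t : ℝ, t ∈ Set.uIoc (0:ℝ) 1 →
      ‖ζ - (t:ℂ) * ζ‖ ≤ R ∧ ‖(t:ℂ) * ζ‖ ≤ R := by
    intro ζ hζ t ht
    rw [Set.uIoc_of_le zero_le_one] at ht
    have hζn : ‖ζ‖ ≤ R := by
      have := mem_ball_iff_norm.1 hζ
      have h2 := norm_sub_norm_le ζ ζ₀
      rw [hR]; linarith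
    have h0 : (0:ℝ) ≤ ‖ζ‖ := norm_nonneg _
    constructor
    · have : ζ - (t:ℂ) * ζ = ((1 - t : ℝ) : ℂ) * ζ := by push_cast; ring
      rw [this, norm_mul, Complex.norm_real, Real.norm_eq_abs,
        abs_of_nonneg (by linarith [ht.2] : (0:ℝ) ≤ 1 - t)]
      nlinarith [ht.1.le, ht.2]
    · rw [norm_mul, Complex.norm_real, Real.norm_eq_abs, abs_of_nonneg ht.1.le]
      nlinarith [ht.1.le, ht.2]
  have hF_meas : ∀ᶠ ζ in nhds ζ₀,
      MeasureTheory.AEStronglyMeasurable (F ζ)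
        (MeasureTheory.volume.restrict (Set.uIoc (0:ℝ) 1)) :=
    Filter.Eventually.of_forall fun ζ => (contF ζ).aestronglyMeasurable
  have hF_int : IntervalIntegrable (F ζ₀) MeasureTheory.volume 0 1 :=
    (contF ζ₀).intervalIntegrable _ _
  have hF'_meas : MeasureTheory.AEStronglyMeasurable (F' ζ₀)
      (MeasureTheory.volume.restrict (Set.uIoc (0:ℝ) 1)) := contF'.aestronglyMeasurable
  have h_bound : ∀ᵐ t ∂(MeasureTheory.volume), t ∈ Set.uIoc (0:ℝ) 1 →
      ∀ ζ ∈ Metric.ball ζ₀ 1, ‖F' ζ t‖ ≤ Mf' * Mg + Mf * Mg' := by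
    refine Filter.Eventually.of_forall fun t ht ζ hζ => ?_
    obtain ⟨h1, h2⟩ := hnorm ζ hζ t ht
    rw [Set.uIoc_of_le zero_le_one] at ht
    have e1 : ‖deriv f (ζ - (t:ℂ) * ζ) * (1 - (t:ℂ)) * g ((t:ℂ) * ζ)‖ ≤ Mf' * Mg := by
      rw [norm_mul, norm_mul]
      have b1 := hMf' _ h1
      have b2 := hMg _ h2
      have b3 : ‖(1 : ℂ) - (t:ℂ)‖ ≤ 1 := by
        have : (1 : ℂ) - (t:ℂ) = ((1 - t : ℝ) : ℂ) := by push_cast; ring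
        rw [this, Complex.norm_real, Real.norm_eq_abs,
          abs_of_nonneg (by linarith [ht.2])]
        linarith [ht.1.le]
      calc ‖deriv f (ζ - (t:ℂ) * ζ)‖ * ‖(1:ℂ) - (t:ℂ)‖ * ‖g ((t:ℂ) * ζ)‖
          ≤ Mf' * 1 * Mg := by
            apply mul_le_mul (mul_le_mul b1 b3 (norm_nonneg _) hMf'0) b2 (norm_nonneg _)
            positivity
        _ = Mf' * Mg := by ring
    have e2 : ‖f (ζ - (t:ℂ) * ζ) * (deriv g ((t:ℂ) * ζ) * (t:ℂ))‖ ≤ Mf * Mg' := by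
      rw [norm_mul, norm_mul]
      have b1 := hMf _ h1
      have b2 := hMg' _ h2
      have b3 : ‖(t:ℂ)‖ ≤ 1 := by
        rw [Complex.norm_real, Real.norm_eq_abs, abs_of_nonneg ht.1.le]; exact ht.2
      calc ‖f (ζ - (t:ℂ) * ζ)‖ * (‖deriv g ((t:ℂ) * ζ)‖ * ‖(t:ℂ)‖)
          ≤ Mf * (Mg' * 1) := by
            apply mul_le_mul b1 (mul_le_mul b2 b3 (norm_nonneg _) hMg'0) (by positivity) hMf0
        _ = Mf * Mg' := by ring
    exact (norm_add_le _ _).trans (add_le_add e1 e2)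
  have bound_int : IntervalIntegrable (fun _ : ℝ => Mf' * Mg + Mf * Mg')
      MeasureTheory.volume 0 1 := intervalIntegrable_const
  have h_diff : ∀ᵐ t ∂(MeasureTheory.volume), t ∈ Set.uIoc (0:ℝ) 1 →
      ∀ ζ ∈ Metric.ball ζ₀ 1, HasDerivAt (fun w => F w t) (F' ζ t) ζ := by
    refine Filter.Eventually.of_forall fun t _ ζ _ => ?_
    have hin : HasDerivAt (fun w : ℂ => w - (t:ℂ) * w) (1 - (t:ℂ)) ζ := by
      simpa using (hasDerivAt_id' (x := ζ)).fun_sub ((hasDerivAt_id' (x := ζ)).const_mul (t:ℂ))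
    have hin2 : HasDerivAt (fun w : ℂ => (t:ℂ) * w) (t:ℂ) ζ := by
      simpa using (hasDerivAt_id ζ).const_mul (t:ℂ)
    have h1 : HasDerivAt (fun w : ℂ => f (w - (t:ℂ) * w))
        (deriv f (ζ - (t:ℂ) * ζ) * (1 - (t:ℂ))) ζ :=
      ((hf _).hasDerivAt).comp ζ hin
    have h2 : HasDerivAt (fun w : ℂ => g ((t:ℂ) * w)) (deriv g ((t:ℂ) * ζ) * (t:ℂ)) ζ :=
      ((hg _).hasDerivAt).comp ζ hin2
    exact h1.mul h2
  have key := intervalIntegral.hasDerivAt_integral_of_dominated_loc_of_deriv_le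
    (Metric.ball_mem_nhds ζ₀ one_pos) hF_meas hF_int hF'_meas h_bound bound_int h_diff
  have hG : DifferentiableAt ℂ (fun ζ => ∫ t in (0:ℝ)..1, F ζ t) ζ₀ :=
    key.2.differentiableAt
  exact (differentiableAt_fun_id.mul hG)

lemma convIter_differentiable {f : ℂ → ℂ} (hf : Differentiable ℂ f) (k : ℕ) :
    Differentiable ℂ (convIter f k) := by
  induction k with
  | zero => exact hf
  | succ k ih => exact conv_differentiable ih hf

lemma convIter_bound {b : ℂ → ℂ} (hb : Differentiable ℂ b) {C β : ℝ} (hC : 0 < C) (hβ : 0 < β)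
    (hbd : ∀ ζ : ℂ, ‖b ζ‖ ≤ C * Real.exp (β * ‖ζ‖)) (k : ℕ) (z : ℂ) :
    ‖convIter b k z‖ ≤ C ^ (k+1) * ‖z‖ ^ k / (Nat.factorial k : ℝ) * Real.exp (β * ‖z‖) := by
  induction k generalizing z with
  | zero => simpa [convIter] using hbd z
  | succ k ih =>
    have hcont : Continuous fun t : ℝ =>
        convIter b k (z - (t:ℂ) * z) * b ((t:ℂ) * z) := by
      refine Continuous.mul ?_ ?_
      · exact (convIter_differentiable hb k).continuous.comp
          (continuous_const.sub (Complex.continuous_ofReal.mul continuous_const))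
      · exact hb.continuous.comp (Complex.continuous_ofReal.mul continuous_const)
    set D : ℝ := C ^ (k+2) * ‖z‖ ^ k / (Nat.factorial k : ℝ) * Real.exp (β * ‖z‖) with hD
    have hD0 : 0 ≤ D := by positivity
    have hbnd : ∀ t : ℝ, t ∈ Set.uIoc (0:ℝ) 1 →
        ‖convIter b k (z - (t:ℂ) * z) * b ((t:ℂ) * z)‖ ≤ D * (1 - t) ^ k := by
      intro t ht
      rw [Set.uIoc_of_le zero_le_one] at ht
      have hts : z - (t:ℂ) * z = ((1 - t : ℝ) : ℂ) * z := by push_cast; ring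
      have h1t : (0:ℝ) ≤ 1 - t := by linarith [ht.2]
      have hn1 : ‖z - (t:ℂ) * z‖ = (1 - t) * ‖z‖ := by
        rw [hts, norm_mul, Complex.norm_real, Real.norm_eq_abs, abs_of_nonneg h1t]
      have hn2 : ‖(t:ℂ) * z‖ = t * ‖z‖ := by
        rw [norm_mul, Complex.norm_real, Real.norm_eq_abs, abs_of_nonneg ht.1.le]
      rw [norm_mul]
      calc ‖convIter b k (z - (t:ℂ) * z)‖ * ‖b ((t:ℂ) * z)‖
          ≤ (C ^ (k+1) * ‖z - (t:ℂ) * z‖ ^ k / (Nat.factorial k : ℝ)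
              * Real.exp (β * ‖z - (t:ℂ) * z‖)) * (C * Real.exp (β * ‖(t:ℂ) * z‖)) := by
            apply mul_le_mul (ih _) (hbd _) (norm_nonneg _) (by positivity)
        _ = D * (1 - t) ^ k := by
            rw [hn1, hn2, hD]
            have hexp : Real.exp (β * ((1 - t) * ‖z‖)) * Real.exp (β * (t * ‖z‖))
                = Real.exp (β * ‖z‖) := by
              rw [← Real.exp_add]; congr 1; ring
            calc C ^ (k+1) * ((1 - t) * ‖z‖) ^ k / (Nat.factorial k : ℝ)
                  * Real.exp (β * ((1 - t) * ‖z‖)) * (C * Real.exp (β * (t * ‖z‖)))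
                = C ^ (k+2) * ‖z‖ ^ k / (Nat.factorial k : ℝ) * (1-t)^k *
                  (Real.exp (β * ((1 - t) * ‖z‖)) * Real.exp (β * (t * ‖z‖))) := by
                  rw [mul_pow]; ring
              _ = _ := by rw [hexp]; ring
    have hDi : IntervalIntegrable (fun t : ℝ => D * (1 - t) ^ k)
        MeasureTheory.volume 0 1 := by
      apply Continuous.intervalIntegrable
      exact continuous_const.mul ((continuous_const.sub continuous_id).pow k)
    have hint : ∫ t in (0:ℝ)..1, D * (1 - t) ^ k = D / (k + 1) := by
      rw [intervalIntegral.integral_const_mul]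
      have : ∫ t in (0:ℝ)..1, (1 - t) ^ k = ∫ t in (0:ℝ)..1, t ^ k := by
        have := intervalIntegral.integral_comp_sub_left (a := (0:ℝ)) (b := 1)
          (fun s : ℝ => s ^ k) 1
        simpa using this
      rw [this, integral_pow]
      norm_num
      rw [div_eq_mul_inv]
    have hnormint : ‖∫ t in (0:ℝ)..1, convIter b k (z - (t:ℂ) * z) * b ((t:ℂ) * z)‖
        ≤ D / (k + 1) := by
      have := intervalIntegral.norm_integral_le_abs_of_norm_le
        (f := fun t : ℝ => convIter b k (z - (t:ℂ) * z) * b ((t:ℂ) * z))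
        (g := fun t : ℝ => D * (1 - t) ^ k) (μ := MeasureTheory.volume) (a := 0) (b := 1)
        ((MeasureTheory.ae_restrict_iff' measurableSet_uIoc).2
          (Filter.Eventually.of_forall hbnd)) hDi
      rw [hint] at this
      calc ‖∫ t in (0:ℝ)..1, convIter b k (z - (t:ℂ) * z) * b ((t:ℂ) * z)‖
          ≤ |D / (k + 1)| := this
        _ = D / (k + 1) := abs_of_nonneg (by positivity)
    show ‖conv (convIter b k) b z‖ ≤ _
    rw [conv, norm_mul]
    calc ‖z‖ * ‖∫ t in (0:ℝ)..1, convIter b k (z - (t:ℂ) * z) * b ((t:ℂ) * z)‖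
        ≤ ‖z‖ * (D / (k + 1)) := by
          exact mul_le_mul_of_nonneg_left hnormint (norm_nonneg _)
      _ = C ^ (k+1+1) * ‖z‖ ^ (k+1) / (Nat.factorial (k+1) : ℝ) * Real.exp (β * ‖z‖) := by
          rw [hD, Nat.factorial_succ]
          push_cast
          field_simp
          ring

lemma real_exp_tsum (x : ℝ) : Real.exp x = ∑' n : ℕ, x ^ n / (Nat.factorial n : ℝ) := by
  rw [Real.exp_eq_exp_ℝ, NormedSpace.exp_eq_tsum_div]

lemma pow_div_fact_le_exp {x : ℝ} (hx : 0 ≤ x) (k : ℕ) :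
    x ^ k / (Nat.factorial k : ℝ) ≤ Real.exp x := by
  rw [real_exp_tsum]
  exact Summable.le_tsum (Real.summable_pow_div_factorial x) k (fun j _ => by positivity)

lemma term_norm_le {b : ℂ → ℂ} (hb : Differentiable ℂ b) {C β : ℝ} (hC : 0 < C) (hβ : 0 < β)
    (hbd : ∀ ζ : ℂ, ‖b ζ‖ ≤ C * Real.exp (β * ‖ζ‖)) (k : ℕ) (ξ z : ℂ) :
    ‖(-ξ) ^ (k + 1) / (Nat.factorial (k + 1) : ℂ) * convIter b k z‖ ≤
      C * ‖ξ‖ * (C * ‖ξ‖ * ‖z‖) ^ k / ((Nat.factorial k : ℝ) * (Nat.factorial k : ℝ))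
        * Real.exp (β * ‖z‖) := by
  have hfc : ‖(Nat.factorial (k+1) : ℂ)‖ = (Nat.factorial (k+1) : ℝ) := by
    rw [Complex.norm_natCast]
  rw [norm_mul, norm_div, norm_pow, norm_neg, hfc]
  have hf1 : (1:ℝ) ≤ (Nat.factorial k : ℝ) := by exact_mod_cast k.factorial_pos
  calc ‖ξ‖ ^ (k+1) / (Nat.factorial (k+1) : ℝ) * ‖convIter b k z‖
      ≤ ‖ξ‖ ^ (k+1) / (Nat.factorial (k+1) : ℝ) *
        (C ^ (k+1) * ‖z‖ ^ k / (Nat.factorial k : ℝ) * Real.exp (β * ‖z‖)) := by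
        exact mul_le_mul_of_nonneg_left (convIter_bound hb hC hβ hbd k z) (by positivity)
    _ = (C * ‖ξ‖ * (C * ‖ξ‖ * ‖z‖) ^ k * Real.exp (β * ‖z‖))
          / ((Nat.factorial (k+1) : ℝ) * (Nat.factorial k : ℝ)) := by
        rw [mul_pow, mul_pow, pow_succ C k, pow_succ ‖ξ‖ k]
        field_simp
    _ ≤ (C * ‖ξ‖ * (C * ‖ξ‖ * ‖z‖) ^ k * Real.exp (β * ‖z‖))
          / ((Nat.factorial k : ℝ) * (Nat.factorial k : ℝ)) := by
        gcongr
        exact Nat.le_succ k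
    _ = C * ‖ξ‖ * (C * ‖ξ‖ * ‖z‖) ^ k / ((Nat.factorial k : ℝ) * (Nat.factorial k : ℝ))
          * Real.exp (β * ‖z‖) := by ring

lemma convIter_deriv_bound {b : ℂ → ℂ} (hb : Differentiable ℂ b) {C β : ℝ} (hC : 0 < C)
    (hβ : 0 < β) (hbd : ∀ ζ : ℂ, ‖b ζ‖ ≤ C * Real.exp (β * ‖ζ‖)) (k : ℕ) (z : ℂ) :
    ‖deriv (convIter b k) z‖ ≤
      C ^ (k+1) * (‖z‖ + 1) ^ k / (Nat.factorial k : ℝ) * Real.exp (β * (‖z‖ + 1)) := by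
  apply deriv_cauchy_bound (convIter_differentiable hb k)
  intro w hw
  have hwz : ‖w‖ ≤ ‖z‖ + 1 := by
    calc ‖w‖ = ‖(w - z) + z‖ := by ring_nf
      _ ≤ ‖w - z‖ + ‖z‖ := norm_add_le _ _
      _ ≤ ‖z‖ + 1 := by linarith
  refine (convIter_bound hb hC hβ hbd k w).trans ?_
  gcongr

lemma summable_norm_term {b : ℂ → ℂ} (hb : Differentiable ℂ b) {C β : ℝ} (hC : 0 < C)
    (hβ : 0 < β) (hbd : ∀ ζ : ℂ, ‖b ζ‖ ≤ C * Real.exp (β * ‖ζ‖)) (ξ z : ℂ) :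
    Summable (fun k : ℕ =>
      ‖(-ξ) ^ (k + 1) / (Nat.factorial (k + 1) : ℂ) * convIter b k z‖) := by
  refine Summable.of_nonneg_of_le (fun k => norm_nonneg _) (fun k => ?_)
    ((Real.summable_pow_div_factorial (C * ‖ξ‖ * ‖z‖)).mul_left
      (C * ‖ξ‖ * Real.exp (β * ‖z‖)))
  · refine (term_norm_le hb hC hβ hbd k ξ z).trans ?_
    have hf1 : (1:ℝ) ≤ (Nat.factorial k : ℝ) := by exact_mod_cast k.factorial_pos
    calc C * ‖ξ‖ * (C * ‖ξ‖ * ‖z‖) ^ k / ((Nat.factorial k : ℝ) * (Nat.factorial k : ℝ))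
          * Real.exp (β * ‖z‖)
        ≤ C * ‖ξ‖ * (C * ‖ξ‖ * ‖z‖) ^ k / ((Nat.factorial k : ℝ) * 1) * Real.exp (β * ‖z‖) := by
          gcongr
      _ = (C * ‖ξ‖ * Real.exp (β * ‖z‖)) * ((C * ‖ξ‖ * ‖z‖) ^ k / (Nat.factorial k : ℝ)) := by
          ring

open ContinuousLinearMap in
set_option maxHeartbeats 1000000 in
lemma Kker_differentiable {b : ℂ → ℂ} (hb : Differentiable ℂ b) {C β : ℝ} (hC : 0 < C)
    (hβ : 0 < β) (hbd : ∀ ζ : ℂ, ‖b ζ‖ ≤ C * Real.exp (β * ‖ζ‖)) :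
    Differentiable ℂ (fun p : ℂ × ℂ => ∑' k : ℕ,
      (-p.1) ^ (k + 1) / (Nat.factorial (k + 1) : ℂ) * convIter b k (p.2 - p.1)) := by
  intro p₀
  set S1 : ℝ := ‖p₀.1‖ + 1 with hS1
  set S2 : ℝ := ‖p₀.2 - p₀.1‖ + 2 with hS2
  have hS1p : 0 < S1 := by positivity
  have hS2p : 0 < S2 := by positivity
  set E1 : ℝ := Real.exp (β * (S2 + 1)) with hE1
  set E2 : ℝ := Real.exp (β * S2) with hE2
  set L : (ℂ × ℂ) →L[ℂ] ℂ := ContinuousLinearMap.snd ℂ ℂ ℂ - ContinuousLinearMap.fst ℂ ℂ ℂ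
    with hL
  have hLnorm : ‖L‖ ≤ 2 := by
    refine (norm_sub_le _ _).trans ?_
    have := ContinuousLinearMap.norm_snd_le (𝕜 := ℂ) (E := ℂ) (F := ℂ)
    have := ContinuousLinearMap.norm_fst_le ℂ ℂ ℂ
    linarith
  set d : ℕ → ℂ → ℂ := fun k ξ => ((k : ℂ) + 1) * (-ξ) ^ k * (-1) / (Nat.factorial (k+1) : ℂ)
    with hd
  set f' : ℕ → ℂ × ℂ → (ℂ × ℂ) →L[ℂ] ℂ := fun k x =>
    ((-x.1) ^ (k + 1) / (Nat.factorial (k + 1) : ℂ)) • (deriv (convIter b k) (x.2 - x.1) • L)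
      + (convIter b k (x.2 - x.1)) • (d k x.1 • ContinuousLinearMap.fst ℂ ℂ ℂ) with hf'
  have hasF : ∀ (k : ℕ) (x : ℂ × ℂ),
      HasFDerivAt (fun p : ℂ × ℂ =>
        (-p.1) ^ (k + 1) / (Nat.factorial (k + 1) : ℂ) * convIter b k (p.2 - p.1))
        (f' k x) x := by
    intro k x
    have hc : HasDerivAt (fun w : ℂ => (-w) ^ (k+1) / (Nat.factorial (k+1) : ℂ))
        (d k x.1) x.1 := by
      have h0 : HasDerivAt (fun w : ℂ => -w) (-1) x.1 := hasDerivAt_neg x.1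
      have h1 := (hasDerivAt_pow (k+1) (-x.1)).comp x.1 h0
      have h2 := h1.div_const (Nat.factorial (k+1) : ℂ)
      have : ((k:ℂ)+1) * (-x.1) ^ k * (-1) = (↑(k + 1) * (-x.1) ^ (k + 1 - 1)) * (-1) := by
        push_cast [Nat.add_sub_cancel]; ring
      rw [hd]
      simpa [this] using h2
    have hcF : HasFDerivAt (fun p : ℂ × ℂ => (-p.1) ^ (k+1) / (Nat.factorial (k+1) : ℂ))
        (d k x.1 • ContinuousLinearMap.fst ℂ ℂ ℂ) x :=
      hc.comp_hasFDerivAt x hasFDerivAt_fst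
    have hsub : HasFDerivAt (fun p : ℂ × ℂ => p.2 - p.1) L x :=
      hasFDerivAt_snd.sub hasFDerivAt_fst
    have hB : HasDerivAt (convIter b k) (deriv (convIter b k) (x.2 - x.1)) (x.2 - x.1) :=
      ((convIter_differentiable hb k) _).hasDerivAt
    have hBF : HasFDerivAt (fun p : ℂ × ℂ => convIter b k (p.2 - p.1))
        (deriv (convIter b k) (x.2 - x.1) • L) x :=
      hB.comp_hasFDerivAt x hsub
    exact hcF.mul hBF
  set v : ℕ → ℝ := fun k =>
    (2 * C * S1 * E1) * ((C * S1 * (S2+1)) ^ k / (Nat.factorial k : ℝ))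
      + (C * E2) * ((C * S1 * S2) ^ k / (Nat.factorial k : ℝ)) with hv
  have hv_sum : Summable v :=
    ((Real.summable_pow_div_factorial _).mul_left _).add
      ((Real.summable_pow_div_factorial _).mul_left _)
  have hf'_le : ∀ (k : ℕ) (x : ℂ × ℂ), x ∈ Metric.ball p₀ 1 → ‖f' k x‖ ≤ v k := by
    intro k x hx
    have hx1 : ‖x.1‖ ≤ S1 := by
      have h1 : ‖x.1 - p₀.1‖ ≤ ‖x - p₀‖ := norm_fst_le (x - p₀)
      have h2 : ‖x - p₀‖ ≤ 1 := (mem_ball_iff_norm.1 hx).le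
      have h3 := norm_sub_norm_le x.1 p₀.1
      rw [hS1]; linarith
    have hx2 : ‖x.2 - x.1‖ ≤ S2 := by
      have h1 : ‖x.1 - p₀.1‖ ≤ ‖x - p₀‖ := norm_fst_le (x - p₀)
      have h1' : ‖x.2 - p₀.2‖ ≤ ‖x - p₀‖ := norm_snd_le (x - p₀)
      have h2 : ‖x - p₀‖ ≤ 1 := (mem_ball_iff_norm.1 hx).le
      have h4 : x.2 - x.1 = (p₀.2 - p₀.1) + ((x.2 - p₀.2) - (x.1 - p₀.1)) := by ring
      calc ‖x.2 - x.1‖ = ‖(p₀.2 - p₀.1) + ((x.2 - p₀.2) - (x.1 - p₀.1))‖ := by rw [← h4]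
        _ ≤ ‖p₀.2 - p₀.1‖ + ‖(x.2 - p₀.2) - (x.1 - p₀.1)‖ := norm_add_le _ _
        _ ≤ ‖p₀.2 - p₀.1‖ + (‖x.2 - p₀.2‖ + ‖x.1 - p₀.1‖) := by
            have := norm_sub_le (x.2 - p₀.2) (x.1 - p₀.1); linarith
        _ ≤ S2 := by rw [hS2]; linarith
    have hf1 : (1:ℝ) ≤ (Nat.factorial k : ℝ) := by exact_mod_cast k.factorial_pos
    have hf1' : (1:ℝ) ≤ (Nat.factorial (k+1) : ℝ) := by exact_mod_cast (k+1).factorial_pos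
    have hcnorm : ‖(-x.1) ^ (k + 1) / (Nat.factorial (k + 1) : ℂ)‖
        = ‖x.1‖ ^ (k+1) / (Nat.factorial (k+1) : ℝ) := by
      rw [norm_div, norm_pow, norm_neg, Complex.norm_natCast]
    have hdnorm : ‖d k x.1‖ = ‖x.1‖ ^ k / (Nat.factorial k : ℝ) := by
      have h5 : ((k : ℂ) + 1) = ((k + 1 : ℕ) : ℂ) := by push_cast; ring
      have hkf : (0:ℝ) < (Nat.factorial k : ℝ) := by positivity
      simp only [hd]
      rw [norm_div, norm_mul, norm_mul, norm_neg, norm_one, norm_pow, norm_neg,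
        h5, Complex.norm_natCast, Complex.norm_natCast, Nat.factorial_succ]
      push_cast
      field_simp
    have hderivB := convIter_deriv_bound hb hC hβ hbd k (x.2 - x.1)
    have hBn := convIter_bound hb hC hβ hbd k (x.2 - x.1)
    have step1 : ‖f' k x‖ ≤
        (‖x.1‖ ^ (k+1) / (Nat.factorial (k+1) : ℝ)) *
          (C ^ (k+1) * (S2+1) ^ k / (Nat.factorial k : ℝ) * E1) * 2
        + (C ^ (k+1) * S2 ^ k / (Nat.factorial k : ℝ) * E2) *
          (‖x.1‖ ^ k / (Nat.factorial k : ℝ)) := by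
      refine (norm_add_le _ _).trans (add_le_add ?_ ?_)
      · rw [norm_smul ((-x.1) ^ (k + 1) / ((Nat.factorial (k + 1) : ℕ) : ℂ))
            (deriv (convIter b k) (x.2 - x.1) • L),
          norm_smul (deriv (convIter b k) (x.2 - x.1)) L, hcnorm]
        have hd1 : ‖deriv (convIter b k) (x.2 - x.1)‖
            ≤ C ^ (k+1) * (S2+1) ^ k / (Nat.factorial k : ℝ) * E1 := by
          refine hderivB.trans ?_
          rw [hE1]
          gcongr <;> linarith [norm_nonneg (x.2 - x.1)]
        calc ‖x.1‖ ^ (k+1) / (Nat.factorial (k+1) : ℝ) *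
              (‖deriv (convIter b k) (x.2 - x.1)‖ * ‖L‖)
            ≤ ‖x.1‖ ^ (k+1) / (Nat.factorial (k+1) : ℝ) *
              ((C ^ (k+1) * (S2+1) ^ k / (Nat.factorial k : ℝ) * E1) * 2) := by
              refine mul_le_mul_of_nonneg_left ?_ (by positivity)
              exact mul_le_mul hd1 hLnorm (norm_nonneg _) (by positivity)
          _ = (‖x.1‖ ^ (k+1) / (Nat.factorial (k+1) : ℝ)) *
              (C ^ (k+1) * (S2+1) ^ k / (Nat.factorial k : ℝ) * E1) * 2 := by ring
      · rw [norm_smul (convIter b k (x.2 - x.1)) (d k x.1 • ContinuousLinearMap.fst ℂ ℂ ℂ),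
          norm_smul (d k x.1) (ContinuousLinearMap.fst ℂ ℂ ℂ), hdnorm]
        have hfstn : ‖ContinuousLinearMap.fst ℂ ℂ ℂ‖ ≤ 1 := ContinuousLinearMap.norm_fst_le ℂ ℂ ℂ
        have hB1 : ‖convIter b k (x.2 - x.1)‖
            ≤ C ^ (k+1) * S2 ^ k / (Nat.factorial k : ℝ) * E2 := by
          refine hBn.trans ?_
          rw [hE2]
          gcongr <;> linarith [norm_nonneg (x.2 - x.1)]
        calc ‖convIter b k (x.2 - x.1)‖ *
              (‖x.1‖ ^ k / (Nat.factorial k : ℝ) * ‖ContinuousLinearMap.fst ℂ ℂ ℂ‖)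
            ≤ (C ^ (k+1) * S2 ^ k / (Nat.factorial k : ℝ) * E2) *
              (‖x.1‖ ^ k / (Nat.factorial k : ℝ) * 1) := by
              refine mul_le_mul hB1 ?_ (by positivity) (by positivity)
              exact mul_le_mul_of_nonneg_left hfstn (by positivity)
          _ = (C ^ (k+1) * S2 ^ k / (Nat.factorial k : ℝ)) * E2 *
              (‖x.1‖ ^ k / (Nat.factorial k : ℝ)) := by ring
    refine step1.trans ?_
    rw [hv]
    have hE1p : 0 < E1 := Real.exp_pos _
    have hE2p : 0 < E2 := Real.exp_pos _
    have part1 : (‖x.1‖ ^ (k+1) / (Nat.factorial (k+1) : ℝ)) *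
          (C ^ (k+1) * (S2+1) ^ k / (Nat.factorial k : ℝ) * E1) * 2
        ≤ (2 * C * S1 * E1) * ((C * S1 * (S2+1)) ^ k / (Nat.factorial k : ℝ)) := by
      calc (‖x.1‖ ^ (k+1) / (Nat.factorial (k+1) : ℝ)) *
            (C ^ (k+1) * (S2+1) ^ k / (Nat.factorial k : ℝ) * E1) * 2
          ≤ (S1 ^ (k+1) / 1) * (C ^ (k+1) * (S2+1) ^ k / (Nat.factorial k : ℝ) * E1) * 2 := by
            gcongr
        _ = (2 * C * S1 * E1) * ((C * S1 * (S2+1)) ^ k / (Nat.factorial k : ℝ)) := by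
            rw [mul_pow, mul_pow, pow_succ S1 k, pow_succ C k]
            field_simp
    have part2 : (C ^ (k+1) * S2 ^ k / (Nat.factorial k : ℝ) * E2) *
          (‖x.1‖ ^ k / (Nat.factorial k : ℝ))
        ≤ (C * E2) * ((C * S1 * S2) ^ k / (Nat.factorial k : ℝ)) := by
      calc (C ^ (k+1) * S2 ^ k / (Nat.factorial k : ℝ) * E2) *
            (‖x.1‖ ^ k / (Nat.factorial k : ℝ))
          ≤ (C ^ (k+1) * S2 ^ k / (Nat.factorial k : ℝ) * E2) * (S1 ^ k / 1) := by
            gcongr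
        _ = (C * E2) * ((C * S1 * S2) ^ k / (Nat.factorial k : ℝ)) := by
            rw [mul_pow, mul_pow, pow_succ C k]
            field_simp
    linarith
  have hsum0 : Summable (fun k : ℕ =>
      (-p₀.1) ^ (k + 1) / (Nat.factorial (k + 1) : ℂ) * convIter b k (p₀.2 - p₀.1)) :=
    (summable_norm_term hb hC hβ hbd p₀.1 (p₀.2 - p₀.1)).of_norm
  have := hasFDerivAt_tsum_of_isPreconnected hv_sum Metric.isOpen_ball
    (convex_ball p₀ 1).isPreconnected (fun k x hx => hasF k x) hf'_le
    (Metric.mem_ball_self one_pos) hsum0 (Metric.mem_ball_self one_pos)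
  exact this.differentiableAt

set_option maxHeartbeats 1000000 in
/-- if `b̂` is entire with `|b̂(ζ)| ≤ C e^{β|ζ|}`, then the series
`K(ξ,ζ) := Σ_{k≥1} ((-ξ)^k/k!) b̂^{*k}(ζ-ξ)` converges (pointwise and locally
uniformly on `ℂ×ℂ`), defines a holomorphic function on `ℂ×ℂ`, and for every
`μ > 0` one has `|K(ξ,ζ)| ≤ C|ξ| e^{μ|ξ| + (C/μ + β)|ζ-ξ|}`. -/
theorem statement6 (b : ℂ → ℂ) (hb : Differentiable ℂ b)
    (C β : ℝ) (hC : 0 < C) (hβ : 0 < β)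
    (hbd : ∀ ζ : ℂ, ‖b ζ‖ ≤ C * Real.exp (β * ‖ζ‖)) :
    (∀ ξ ζ : ℂ, Summable fun k : ℕ =>
      ((-ξ) ^ (k + 1) / (Nat.factorial (k + 1) : ℂ)) * convIter b k (ζ - ξ)) ∧
    TendstoLocallyUniformly
      (fun N : ℕ => fun p : ℂ × ℂ => ∑ k ∈ Finset.range N,
        ((-p.1) ^ (k + 1) / (Nat.factorial (k + 1) : ℂ)) * convIter b k (p.2 - p.1))
      (fun p : ℂ × ℂ => Kker b p.1 p.2) Filter.atTop ∧
    Differentiable ℂ (fun p : ℂ × ℂ => Kker b p.1 p.2) ∧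
    (∀ μ : ℝ, 0 < μ → ∀ ξ ζ : ℂ,
      ‖Kker b ξ ζ‖ ≤ C * ‖ξ‖ * Real.exp (μ * ‖ξ‖ + (C / μ + β) * ‖ζ - ξ‖)) := by
  refine ⟨fun ξ ζ => (summable_norm_term hb hC hβ hbd ξ (ζ - ξ)).of_norm, ?_, ?_, ?_⟩
  · -- locally uniform convergence
    intro u hu p₀
    refine ⟨Metric.closedBall p₀ 1, Metric.closedBall_mem_nhds p₀ one_pos, ?_⟩
    set R1 : ℝ := ‖p₀.1‖ + 1 with hR1
    set R2 : ℝ := ‖p₀.2 - p₀.1‖ + 2 with hR2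
    have hR1p : 0 < R1 := by positivity
    have hR2p : 0 < R2 := by positivity
    have hM : Summable (fun k : ℕ =>
        (C * R1 * Real.exp (β * R2)) * ((C * R1 * R2) ^ k / (Nat.factorial k : ℝ))) :=
      (Real.summable_pow_div_factorial _).mul_left _
    have hfu : ∀ (k : ℕ) (p : ℂ × ℂ), p ∈ Metric.closedBall p₀ 1 →
        ‖((-p.1) ^ (k + 1) / (Nat.factorial (k + 1) : ℂ)) * convIter b k (p.2 - p.1)‖ ≤
        (C * R1 * Real.exp (β * R2)) * ((C * R1 * R2) ^ k / (Nat.factorial k : ℝ)) := by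
      intro k p hp
      have h2 : ‖p - p₀‖ ≤ 1 := mem_closedBall_iff_norm.1 hp
      have h1 : ‖p.1 - p₀.1‖ ≤ 1 := le_trans (norm_fst_le (p - p₀)) h2
      have h1' : ‖p.2 - p₀.2‖ ≤ 1 := le_trans (norm_snd_le (p - p₀)) h2
      have hp1 : ‖p.1‖ ≤ R1 := by
        have := norm_sub_norm_le p.1 p₀.1
        rw [hR1]; linarith
      have hp2 : ‖p.2 - p.1‖ ≤ R2 := by
        have h4 : p.2 - p.1 = (p₀.2 - p₀.1) + ((p.2 - p₀.2) - (p.1 - p₀.1)) := by ring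
        calc ‖p.2 - p.1‖ = ‖(p₀.2 - p₀.1) + ((p.2 - p₀.2) - (p.1 - p₀.1))‖ := by rw [← h4]
          _ ≤ ‖p₀.2 - p₀.1‖ + ‖(p.2 - p₀.2) - (p.1 - p₀.1)‖ := norm_add_le _ _
          _ ≤ ‖p₀.2 - p₀.1‖ + (‖p.2 - p₀.2‖ + ‖p.1 - p₀.1‖) := by
              have := norm_sub_le (p.2 - p₀.2) (p.1 - p₀.1); linarith
          _ ≤ R2 := by rw [hR2]; linarith
      have hf1 : (1:ℝ) ≤ (Nat.factorial k : ℝ) := by exact_mod_cast k.factorial_pos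
      refine (term_norm_le hb hC hβ hbd k p.1 (p.2 - p.1)).trans ?_
      calc C * ‖p.1‖ * (C * ‖p.1‖ * ‖p.2 - p.1‖) ^ k
              / ((Nat.factorial k : ℝ) * (Nat.factorial k : ℝ)) * Real.exp (β * ‖p.2 - p.1‖)
          ≤ C * R1 * (C * R1 * R2) ^ k
              / ((Nat.factorial k : ℝ) * 1) * Real.exp (β * R2) := by
            gcongr <;> positivity
        _ = (C * R1 * Real.exp (β * R2)) * ((C * R1 * R2) ^ k / (Nat.factorial k : ℝ)) := by
            ring
    have huni := tendstoUniformlyOn_tsum_nat hM hfu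
    have hKeq : (fun p : ℂ × ℂ => Kker b p.1 p.2) = fun p : ℂ × ℂ =>
        ∑' k : ℕ, ((-p.1) ^ (k + 1) / (Nat.factorial (k + 1) : ℂ)) * convIter b k (p.2 - p.1) :=
      rfl
    rw [hKeq]
    exact huni u hu
  · exact Kker_differentiable hb hC hβ hbd
  · intro μ hμ ξ ζ
    set z : ℂ := ζ - ξ with hz
    have hμ0 : μ ≠ 0 := ne_of_gt hμ
    have hsn := summable_norm_term hb hC hβ hbd ξ z
    set A : ℝ := C * ‖ξ‖ * Real.exp (β * ‖z‖) * Real.exp ((C/μ) * ‖z‖) with hA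
    have hu_sum : Summable (fun k : ℕ => A * ((μ * ‖ξ‖) ^ k / (Nat.factorial k : ℝ))) :=
      (Real.summable_pow_div_factorial _).mul_left _
    have hbound : ∀ k : ℕ,
        ‖((-ξ) ^ (k + 1) / (Nat.factorial (k + 1) : ℂ)) * convIter b k z‖ ≤
          A * ((μ * ‖ξ‖) ^ k / (Nat.factorial k : ℝ)) := by
      intro k
      refine (term_norm_le hb hC hβ hbd k ξ z).trans ?_
      have hsplit : (C * ‖ξ‖ * ‖z‖) ^ k = (μ * ‖ξ‖) ^ k * ((C/μ) * ‖z‖) ^ k := by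
        rw [← mul_pow]
        congr 1
        field_simp
      have hexp := pow_div_fact_le_exp (x := (C/μ) * ‖z‖) (by positivity) k
      calc C * ‖ξ‖ * (C * ‖ξ‖ * ‖z‖) ^ k
              / ((Nat.factorial k : ℝ) * (Nat.factorial k : ℝ)) * Real.exp (β * ‖z‖)
          = (C * ‖ξ‖ * Real.exp (β * ‖z‖)) * ((μ * ‖ξ‖) ^ k / (Nat.factorial k : ℝ))
              * (((C/μ) * ‖z‖) ^ k / (Nat.factorial k : ℝ)) := by
            rw [hsplit]; ring
        _ ≤ (C * ‖ξ‖ * Real.exp (β * ‖z‖)) * ((μ * ‖ξ‖) ^ k / (Nat.factorial k : ℝ))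
              * Real.exp ((C/μ) * ‖z‖) := by
            refine mul_le_mul_of_nonneg_left hexp (by positivity)
        _ = A * ((μ * ‖ξ‖) ^ k / (Nat.factorial k : ℝ)) := by rw [hA]; ring
    have hKle : ‖Kker b ξ ζ‖ ≤ ∑' k : ℕ, A * ((μ * ‖ξ‖) ^ k / (Nat.factorial k : ℝ)) := by
      refine (norm_tsum_le_tsum_norm hsn).trans ?_
      exact Summable.tsum_le_tsum hbound hsn hu_sum
    have htsum : ∑' k : ℕ, A * ((μ * ‖ξ‖) ^ k / (Nat.factorial k : ℝ))
        = A * Real.exp (μ * ‖ξ‖) := by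
      rw [tsum_mul_left, ← real_exp_tsum]
    rw [htsum] at hKle
    refine hKle.trans_eq ?_
    rw [hA]
    have : Real.exp (μ * ‖ξ‖ + (C / μ + β) * ‖z‖)
        = Real.exp (β * ‖z‖) * Real.exp ((C/μ) * ‖z‖) * Real.exp (μ * ‖ξ‖) := by
      rw [← Real.exp_add, ← Real.exp_add]
      congr 1
      ring
    rw [this]
    ring
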